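/- arXiv:2603.05335 — 3 statements merged into one kernel-verified Lean document; each statement's English description precedes it below -/
import Mathlib

section
/- Let D be a compact topological space, k a positive natural number, and R : Fin k → D → [0,∞] a family of lower semicontinuous functions. Let S = { (R 1 δ, …, R k δ) : δ ∈ D } ⊆ [0,∞]^k be the risk set. Then for every point r* in the closure of S (in the product topology of [0,∞]^k) there exists δ* ∈ D with R j δ* ≤ r*_j for every j. In particular, the lower set S⁺ = { r' ∈ [0,∞]^k : ∃ r ∈ S, r ≤ r' coordinatewise } is closed. -/
open scoped ENNReal
open Set

lemma aux_attain {D : Type*} [TopologicalSpace D] [CompactSpace D] {k : ℕ}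
    (R : Fin k → D → ℝ≥0∞) (hR : ∀ j, LowerSemicontinuous (R j))
    (r : Fin k → ℝ≥0∞) (h : ∀ ε : ℝ≥0∞, 0 < ε → ∃ δ, ∀ j, R j δ ≤ r j + ε) :
    ∃ δ, ∀ j, R j δ ≤ r j := by
  set K : {ε : ℝ≥0∞ // 0 < ε} → Set D := fun ε => {δ | ∀ j, R j δ ≤ r j + ε.1} with hK
  have hcl : ∀ ε, IsClosed (K ε) := by
    intro ε
    have : K ε = ⋂ j, R j ⁻¹' Iic (r j + ε.1) := by
      ext δ; simp [hK, Set.mem_iInter]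
    rw [this]
    exact isClosed_iInter fun j => (hR j).isClosed_preimage _
  have : Nonempty {ε : ℝ≥0∞ // 0 < ε} := ⟨⟨1, one_pos⟩⟩
  have hdir : Directed (· ⊇ ·) K := by
    intro ε₁ ε₂
    refine ⟨⟨min ε₁.1 ε₂.1, lt_min ε₁.2 ε₂.2⟩, ?_, ?_⟩ <;>
      intro δ hδ j <;>
      exact le_trans (hδ j) (add_le_add le_rfl (by simp))
  obtain ⟨δ, hδ⟩ := IsCompact.nonempty_iInter_of_directed_nonempty_isCompact_isClosed
    K hdir (fun ε => h ε.1 ε.2) (fun ε => (hcl ε).isCompact) hcl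
  refine ⟨δ, fun j => ?_⟩
  refine ENNReal.le_of_forall_pos_le_add fun ε hε _ => ?_
  have := Set.mem_iInter.1 hδ ⟨ε, by exact_mod_cast hε⟩
  exact this j

lemma aux_approx {k : ℕ} {S : Set (Fin k → ℝ≥0∞)} {r : Fin k → ℝ≥0∞}
    (hr : r ∈ closure S) (ε : ℝ≥0∞) (hε : 0 < ε) :
    ∃ v ∈ S, ∀ j, v j ≤ r j + ε := by
  have hN : {v : Fin k → ℝ≥0∞ | ∀ j, v j ≤ r j + ε} ∈ nhds r := by
    have : {v : Fin k → ℝ≥0∞ | ∀ j, v j ≤ r j + ε}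
        = ⋂ j, (fun v : Fin k → ℝ≥0∞ => v j) ⁻¹' Iic (r j + ε) := by
      ext v; simp [Set.mem_iInter]
    rw [this]
    refine (Filter.iInter_mem).2 fun j => ?_
    rcases eq_or_ne (r j) ∞ with h | h
    · simp [h]
    · exact (continuous_apply j).continuousAt.preimage_mem_nhds
        (Iic_mem_nhds (ENNReal.lt_add_right h hε.ne'))
  obtain ⟨v, hv1, hv2⟩ := mem_closure_iff_nhds.1 hr _ hN
  exact ⟨v, hv2, hv1⟩

/-- For lower semicontinuous risks on a compact decision space,
every point of the closure of the risk set is coordinatewise dominated by an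
attained risk vector; in particular the lower set of the risk set is closed. -/
theorem risk_set_lower_comprehensive_closed {D : Type*} [TopologicalSpace D]
    [CompactSpace D] (k : ℕ) (hk : 0 < k) (R : Fin k → D → ℝ≥0∞)
    (hR : ∀ j, LowerSemicontinuous (R j)) :
    (∀ rstar ∈ closure {v : Fin k → ℝ≥0∞ | ∃ δ : D, ∀ j, v j = R j δ},
      ∃ δstar : D, ∀ j, R j δstar ≤ rstar j) ∧
    IsClosed {r' : Fin k → ℝ≥0∞ |
      ∃ r ∈ {v : Fin k → ℝ≥0∞ | ∃ δ : D, ∀ j, v j = R j δ}, ∀ j, r j ≤ r' j} := by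
  constructor
  · intro rstar hrstar
    refine aux_attain R hR rstar fun ε hε => ?_
    obtain ⟨v, ⟨δ, hδ⟩, hv⟩ := aux_approx hrstar ε hε
    exact ⟨δ, fun j => (hδ j ▸ hv j)⟩
  · refine isClosed_of_closure_subset fun r' hr' => ?_
    obtain ⟨δ, hδ⟩ := aux_attain R hR r' fun ε hε => by
      obtain ⟨v, ⟨s, ⟨δ, hδ⟩, hs⟩, hv⟩ := aux_approx hr' ε hε
      exact ⟨δ, fun j => le_trans (hδ j ▸ hs j) (hv j)⟩
    exact ⟨fun j => R j δ, ⟨δ, fun _ => rfl⟩, hδ⟩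
end

section
/- Let k be a positive natural number, S ⊆ ℝ^k a convex set, and r* ∈ S a Pareto-minimal point of S, i.e., there is no r ∈ S with r ≤ r* coordinatewise and r ≠ r*. Then there exists π ∈ ℝ^k with π_j ≥ 0 for every j, π ≠ 0, such that ⟨π, r*⟩ ≤ ⟨π, r⟩ for every r ∈ S, where ⟨·,·⟩ is the standard inner product on ℝ^k. -/
/-- Supporting-hyperplane identification.  A Pareto-minimal point
`r*` of a convex set `S ⊆ ℝ^k` admits a nonzero nonnegative normal `π` with
`⟨π, r*⟩ ≤ ⟨π, r⟩` for all `r ∈ S`. -/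
theorem supporting_hyperplane_at_pareto_min (k : ℕ) (hk : 0 < k)
    (S : Set (Fin k → ℝ)) (hS : Convex ℝ S)
    (rstar : Fin k → ℝ) (hrstar : rstar ∈ S)
    (hPareto : ¬ ∃ r ∈ S, (∀ j, r j ≤ rstar j) ∧ r ≠ rstar) :
    ∃ π : Fin k → ℝ, (∀ j, 0 ≤ π j) ∧ π ≠ 0 ∧
      ∀ r ∈ S, ∑ j, π j * rstar j ≤ ∑ j, π j * r j := by
  -- The open set O = { x | ∀ j, x j < rstar j } is disjoint from S.
  set O : Set (Fin k → ℝ) := Set.univ.pi (fun j => Set.Iio (rstar j)) with hO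
  have hOopen : IsOpen O := isOpen_set_pi Set.finite_univ (fun j _ => isOpen_Iio)
  have hOconv : Convex ℝ O := convex_pi (fun j _ => convex_Iio _)
  have hdisj : Disjoint O S := by
    rw [Set.disjoint_left]
    intro x hxO hxS
    have hx : ∀ j, x j < rstar j := fun j => hxO j trivial
    apply hPareto
    refine ⟨x, hxS, fun j => le_of_lt (hx j), ?_⟩
    intro h
    have := hx ⟨0, hk⟩
    rw [h] at this
    exact lt_irrefl _ this
  obtain ⟨f, u, hfO, hfS⟩ := geometric_hahn_banach_open hOconv hOopen hS hdisj
  have hmem : ∀ t : ℝ, 0 < t → (rstar - t • (1 : Fin k → ℝ)) ∈ O := by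
    intro t ht j _
    simp only [Pi.sub_apply, Pi.smul_apply, Pi.one_apply, smul_eq_mul, mul_one, Set.mem_Iio]
    linarith
  have hfr : f rstar ≤ u := by
    have hkey : ∀ t : ℝ, 0 < t → f rstar - t * f 1 < u := by
      intro t ht
      have := hfO _ (hmem t ht)
      simpa [map_sub, map_smul, smul_eq_mul] using this
    by_contra h
    push_neg at h
    rcases lt_trichotomy (f (1 : Fin k → ℝ)) 0 with h1 | h1 | h1
    · have := hkey 1 one_pos
      nlinarith
    · have := hkey 1 one_pos
      rw [h1] at this; linarith
    · have := hkey ((f rstar - u) / (2 * f 1)) (div_pos (by linarith) (by linarith))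
      have h2 : (f rstar - u) / (2 * f 1) * f 1 = (f rstar - u) / 2 := by
        field_simp
      rw [h2] at this
      linarith
  set π : Fin k → ℝ := fun j => f (Pi.single j 1) with hπ
  have hsingle : ∀ i : Fin k, (Pi.single i (1:ℝ) : Fin k → ℝ) = fun j => if i = j then 1 else 0 := by
    intro i; funext j; rw [Pi.single_apply]; simp [eq_comm]
  have hrepr : ∀ x : Fin k → ℝ, f x = ∑ j, π j * x j := by
    intro x
    have h1 := LinearMap.pi_apply_eq_sum_univ (f.toLinearMap) x
    simp only [← hsingle] at h1
    calc f x = f.toLinearMap x := rfl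
      _ = ∑ j, π j * x j := by
          rw [h1]
          exact Finset.sum_congr rfl fun i _ => by rw [smul_eq_mul, mul_comm]; rfl
  have hπnn : ∀ j, 0 ≤ π j := by
    intro j
    by_contra h
    push_neg at h
    have key : ∀ t : ℝ, 0 < t → f rstar - f 1 - t * π j < u := by
      intro t ht
      have hmem2 : (rstar - (1 : Fin k → ℝ) - t • (Pi.single j 1 : Fin k → ℝ)) ∈ O := by
        intro i _
        simp only [Pi.sub_apply, Pi.smul_apply, Pi.one_apply, smul_eq_mul, Set.mem_Iio]
        rcases eq_or_ne i j with rfl | hij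
        · simp only [Pi.single_eq_same, mul_one]
          nlinarith
        · simp only [Pi.single_eq_of_ne hij, mul_zero]
          linarith
      have := hfO _ hmem2
      simp only [map_sub, map_smul, smul_eq_mul] at this
      exact this
    set A := u + 1 - (f rstar - f 1) with hA
    have ht := key (max 1 (-A / π j)) (lt_of_lt_of_le one_pos (le_max_left _ _))
    have h2 : max 1 (-A / π j) * π j ≤ (-A / π j) * π j :=
      mul_le_mul_of_nonpos_right (le_max_right _ _) (le_of_lt h)
    have h3 : (-A / π j) * π j = -A := div_mul_cancel₀ _ (ne_of_lt h)
    rw [h3] at h2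
    linarith
  have hπne : π ≠ 0 := by
    intro h0
    have hf0 : f rstar = 0 := by
      rw [hrepr, h0]; simp
    have hf1 : f (1 : Fin k → ℝ) = 0 := by
      rw [hrepr, h0]; simp
    have hmem1 := hfO _ (hmem 1 one_pos)
    have hlt : f rstar - 1 * f 1 < u := by
      simpa [map_sub, map_smul, smul_eq_mul] using hmem1
    have hge := hfS _ hrstar
    rw [hf0, hf1] at hlt
    rw [hf0] at hge
    linarith
  refine ⟨π, hπnn, hπne, fun r hr => ?_⟩
  have h1 := hfS r hr
  rw [hrepr] at h1 hfr
  linarith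
end

section
/- Fix θ ∈ (0,1) and n ≥ 1, and let S_n be a Binomial(n, θ) random variable. With the log-loss ℓ(θ, p) = θ·(−log p) + (1−θ)·(−log(1−p)) ∈ [0,∞] (equal to ∞ when p ∈ {0,1}), the Bayes predictive strictly dominates the plug-in predictor at every parameter value and every sample size: E[ℓ(θ, (S_n + 1/2)/(n+1))] < E[ℓ(θ, S_n/n)] in [0,∞]; in fact the left-hand side is finite and the right-hand side equals ∞. -/
open scoped ENNReal

/-- `negLog p = -log p ∈ [0,∞]`, with the convention `negLog 0 = ∞`. -/
noncomputable def negLog (p : ℝ) : ℝ≥0∞ :=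
  if p = 0 then ⊤ else ENNReal.ofReal (-Real.log p)

/-- The log loss `ℓ(θ,p) = θ·(−log p) + (1−θ)·(−log(1−p)) ∈ [0,∞]`, equal to
`∞` when `p ∈ {0,1}` and `θ ∈ (0,1)`. -/
noncomputable def logLoss (θ p : ℝ) : ℝ≥0∞ :=
  ENNReal.ofReal θ * negLog p + ENNReal.ofReal (1 - θ) * negLog (1 - p)

lemma logLoss_ne_top {θ p : ℝ} (h0 : p ≠ 0) (h1 : p ≠ 1) : logLoss θ p ≠ ⊤ := by
  unfold logLoss negLog
  rw [if_neg h0, if_neg (sub_ne_zero.mpr (Ne.symm h1))]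
  exact ENNReal.add_ne_top.2
    ⟨ENNReal.mul_ne_top ENNReal.ofReal_ne_top ENNReal.ofReal_ne_top,
     ENNReal.mul_ne_top ENNReal.ofReal_ne_top ENNReal.ofReal_ne_top⟩

lemma logLoss_zero_eq_top {θ : ℝ} (hθ : 0 < θ) : logLoss θ 0 = ⊤ := by
  unfold logLoss negLog
  rw [if_pos rfl, ENNReal.mul_top (ENNReal.ofReal_pos.2 hθ).ne', top_add]

/-- In the Bernoulli model with `θ ∈ (0,1)` and `Sₙ` Binomial(n, θ),
the Bayes predictive `(Sₙ + 1/2)/(n+1)` strictly dominates the plug-in `Sₙ/n`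
under expected log loss: the Bayes risk is strictly smaller; in fact it is
finite while the plug-in risk is infinite. -/
theorem bayes_strictly_dominates_plugin {Ω : Type*} [MeasurableSpace Ω]
    (P : MeasureTheory.Measure Ω) [MeasureTheory.IsProbabilityMeasure P]
    (θ : ℝ) (hθ : θ ∈ Set.Ioo (0 : ℝ) 1) (n : ℕ) (hn : 1 ≤ n)
    (S : Ω → ℕ) (hS : Measurable S)
    (hBin : ∀ k : ℕ,
      P {ω | S ω = k} = ENNReal.ofReal ((n.choose k : ℝ) * θ ^ k * (1 - θ) ^ (n - k))) :
    (∫⁻ ω, logLoss θ (((S ω : ℝ) + 1 / 2) / (n + 1)) ∂P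
        < ∫⁻ ω, logLoss θ ((S ω : ℝ) / n) ∂P) ∧
      (∫⁻ ω, logLoss θ (((S ω : ℝ) + 1 / 2) / (n + 1)) ∂P ≠ ⊤) ∧
      (∫⁻ ω, logLoss θ ((S ω : ℝ) / n) ∂P = ⊤) := by
  obtain ⟨hθ0, hθ1⟩ := hθ
  -- plug-in risk is ⊤
  have hzero : P {ω | S ω = 0} = ENNReal.ofReal ((1 - θ) ^ n) := by
    have := hBin 0; simpa using this
  have hposmeas : 0 < P {ω | S ω = 0} := by
    rw [hzero]; exact ENNReal.ofReal_pos.2 (pow_pos (by linarith) n)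
  have hmeas0 : MeasurableSet {ω | S ω = 0} := hS (measurableSet_singleton 0)
  have htop : ∫⁻ ω, logLoss θ ((S ω : ℝ) / n) ∂P = ⊤ := by
    refine top_unique ?_
    calc (⊤ : ℝ≥0∞) = ∫⁻ _ω in {ω | S ω = 0}, ⊤ ∂P := by
          rw [MeasureTheory.setLIntegral_const, ENNReal.top_mul hposmeas.ne']
      _ = ∫⁻ ω in {ω | S ω = 0}, logLoss θ ((S ω : ℝ) / n) ∂P := by
          refine MeasureTheory.setLIntegral_congr_fun hmeas0 ?_
          intro ω hω; beta_reduce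
          have hω' : S ω = 0 := hω
          rw [hω']
          norm_num [logLoss_zero_eq_top hθ0]
      _ ≤ _ := MeasureTheory.setLIntegral_le_lintegral _ _
  -- Bayes risk is finite
  set f : ℕ → ℝ≥0∞ := fun k => logLoss θ (((k : ℝ) + 1 / 2) / (n + 1)) with hf
  set C : ℝ≥0∞ := (Finset.range (n + 1)).sup f with hC
  have hCtop : C ≠ ⊤ := by
    refine ((Finset.sup_lt_iff (by simp : (⊥ : ℝ≥0∞) < ⊤)).2 fun k hk => ?_).ne
    have hk' : (k : ℝ) ≤ n := by exact_mod_cast Nat.lt_succ_iff.1 (Finset.mem_range.1 hk)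
    have hden : (0 : ℝ) < n + 1 := by positivity
    have h0 : ((k : ℝ) + 1 / 2) / (n + 1) ≠ 0 := by positivity
    have h1 : ((k : ℝ) + 1 / 2) / (n + 1) ≠ 1 := by
      have : ((k : ℝ) + 1 / 2) / (n + 1) < 1 := (div_lt_one hden).2 (by linarith)
      linarith
    exact (logLoss_ne_top h0 h1).lt_top
  have hle_n : ∀ᵐ ω ∂P, S ω ≤ n := by
    rw [MeasureTheory.ae_iff]
    have hset : {ω | ¬ S ω ≤ n} ⊆ ⋃ k : ℕ, {ω | S ω = n + 1 + k} := by
      intro ω hω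
      simp only [Set.mem_setOf_eq, not_le] at hω
      exact Set.mem_iUnion.2 ⟨S ω - (n + 1), by simp only [Set.mem_setOf_eq]; omega⟩
    refine MeasureTheory.measure_mono_null hset (MeasureTheory.measure_iUnion_null fun k => ?_)
    rw [hBin, Nat.choose_eq_zero_of_lt (by omega)]
    simp
  have hfin : ∫⁻ ω, logLoss θ (((S ω : ℝ) + 1 / 2) / (n + 1)) ∂P ≤ C := by
    calc ∫⁻ ω, logLoss θ (((S ω : ℝ) + 1 / 2) / (n + 1)) ∂P
        ≤ ∫⁻ _ω, C ∂P := by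
          refine MeasureTheory.lintegral_mono_ae ?_
          filter_upwards [hle_n] with ω hω
          exact Finset.le_sup (f := f) (Finset.mem_range.2 (by omega))
      _ = C := by simp
  exact ⟨by rw [htop]; exact hfin.trans_lt hCtop.lt_top,
    fun h => hCtop (top_unique (h ▸ hfin)), htop⟩
end
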